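/- Let s: ℂ → ℂ^m∖{0} be holomorphic and suppose ∂²/∂z∂z̄ log‖s‖² = 0 identically on ℂ. Then the induced map [s]: ℂ → ℂP^{m−1} is constant, i.e., s(z) = h(z)·v for some nonvanishing holomorphic function h and a fixed vector v ∈ ℂ^m. -/

import Mathlib

open Complex Finset

/-- Wirtinger derivative ∂/∂z of a function ℂ → ℂ. -/
noncomputable def wdz (f : ℂ → ℂ) (z : ℂ) : ℂ :=
  (fderiv ℝ f z 1 - Complex.I * fderiv ℝ f z Complex.I) / 2

/-- Wirtinger derivative ∂/∂z̄ of a function ℂ → ℂ. -/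
noncomputable def wdzbar (f : ℂ → ℂ) (z : ℂ) : ℂ :=
  (fderiv ℝ f z 1 + Complex.I * fderiv ℝ f z Complex.I) / 2

lemma wdz_eq {f : ℂ → ℂ} {z : ℂ} {L : ℂ →L[ℝ] ℂ} (h : HasFDerivAt f L z) :
    wdz f z = (L 1 - Complex.I * L Complex.I) / 2 := by
  simp [wdz, h.fderiv]

lemma wdzbar_eq {f : ℂ → ℂ} {z : ℂ} {L : ℂ →L[ℝ] ℂ} (h : HasFDerivAt f L z) :
    wdzbar f z = (L 1 + Complex.I * L Complex.I) / 2 := by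
  simp [wdzbar, h.fderiv]

lemma wdz_of_holo {f : ℂ → ℂ} {z : ℂ} (h : DifferentiableAt ℂ f z) :
    wdz f z = deriv f z := by
  rw [wdz_eq (h.hasDerivAt.hasFDerivAt.restrictScalars ℝ)]
  simp [ContinuousLinearMap.restrictScalars]
  ring_nf
  simp [Complex.I_sq]
  ring

lemma wdzbar_of_holo {f : ℂ → ℂ} {z : ℂ} (h : DifferentiableAt ℂ f z) :
    wdzbar f z = 0 := by
  rw [wdzbar_eq (h.hasDerivAt.hasFDerivAt.restrictScalars ℝ)]
  simp
  ring_nf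
  simp [Complex.I_sq]

lemma wdz_mul {f g : ℂ → ℂ} {z : ℂ} (hf : DifferentiableAt ℝ f z)
    (hg : DifferentiableAt ℝ g z) :
    wdz (fun w => f w * g w) z = wdz f z * g z + f z * wdz g z := by
  rw [wdz_eq (hf.hasFDerivAt.fun_mul hg.hasFDerivAt)]
  simp [wdz, hf.hasFDerivAt.fderiv, hg.hasFDerivAt.fderiv]
  ring

lemma wdzbar_mul {f g : ℂ → ℂ} {z : ℂ} (hf : DifferentiableAt ℝ f z)
    (hg : DifferentiableAt ℝ g z) :
    wdzbar (fun w => f w * g w) z = wdzbar f z * g z + f z * wdzbar g z := by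
  rw [wdzbar_eq (hf.hasFDerivAt.fun_mul hg.hasFDerivAt)]
  simp [wdzbar, hf.hasFDerivAt.fderiv, hg.hasFDerivAt.fderiv]
  ring

lemma hasFDerivAt_conj {f : ℂ → ℂ} {z : ℂ} {L : ℂ →L[ℝ] ℂ} (h : HasFDerivAt f L z) :
    HasFDerivAt (fun w => (starRingEnd ℂ) (f w))
      ((Complex.conjCLE.toContinuousLinearMap).comp L) z :=
  Complex.conjCLE.toContinuousLinearMap.hasFDerivAt.comp z h

lemma wdzbar_conj {f : ℂ → ℂ} {z : ℂ} (hf : DifferentiableAt ℝ f z) :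
    wdzbar (fun w => (starRingEnd ℂ) (f w)) z = (starRingEnd ℂ) (wdz f z) := by
  rw [wdzbar_eq (hasFDerivAt_conj hf.hasFDerivAt)]
  have h2 : (starRingEnd ℂ) 2 = 2 := by
    rw [Complex.conj_eq_iff_im]; norm_num
  simp [wdz, hf.hasFDerivAt.fderiv, map_sub, map_mul, map_div₀, h2]

lemma wdz_conj {f : ℂ → ℂ} {z : ℂ} (hf : DifferentiableAt ℝ f z) :
    wdz (fun w => (starRingEnd ℂ) (f w)) z = (starRingEnd ℂ) (wdzbar f z) := by
  rw [wdz_eq (hasFDerivAt_conj hf.hasFDerivAt)]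
  have h2 : (starRingEnd ℂ) 2 = 2 := by
    rw [Complex.conj_eq_iff_im]; norm_num
  simp [wdzbar, hf.hasFDerivAt.fderiv, map_add, map_mul, map_div₀, h2]
  ring

lemma wdz_sum {ι : Type*} (t : Finset ι) {f : ι → ℂ → ℂ} {z : ℂ}
    (hf : ∀ i ∈ t, DifferentiableAt ℝ (f i) z) :
    wdz (fun w => ∑ i ∈ t, f i w) z = ∑ i ∈ t, wdz (f i) z := by
  rw [wdz_eq (HasFDerivAt.fun_sum (fun i hi => (hf i hi).hasFDerivAt))]
  simp [wdz, fun i hi => ((hf i hi).hasFDerivAt).fderiv, Finset.sum_div,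
    ContinuousLinearMap.sum_apply, Finset.mul_sum]
  rw [← Finset.sum_sub_distrib, ← Finset.sum_div]

lemma wdzbar_sum {ι : Type*} (t : Finset ι) {f : ι → ℂ → ℂ} {z : ℂ}
    (hf : ∀ i ∈ t, DifferentiableAt ℝ (f i) z) :
    wdzbar (fun w => ∑ i ∈ t, f i w) z = ∑ i ∈ t, wdzbar (f i) z := by
  rw [wdzbar_eq (HasFDerivAt.fun_sum (fun i hi => (hf i hi).hasFDerivAt))]
  simp [wdzbar, fun i hi => ((hf i hi).hasFDerivAt).fderiv, Finset.sum_div,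
    ContinuousLinearMap.sum_apply, Finset.mul_sum]
  rw [← Finset.sum_add_distrib, ← Finset.sum_div]

lemma wdzbar_inv {f : ℂ → ℂ} {z : ℂ} (hf : DifferentiableAt ℝ f z) (hne : f z ≠ 0) :
    wdzbar (fun w => (f w)⁻¹) z = -((f z) ^ 2)⁻¹ * wdzbar f z := by
  have h : HasFDerivAt (fun w => (f w)⁻¹)
      ((ContinuousLinearMap.restrictScalars ℝ
        (ContinuousLinearMap.smulRight (1 : ℂ →L[ℂ] ℂ) (-(f z ^ 2)⁻¹))).comp (fderiv ℝ f z)) z :=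
    ((hasDerivAt_inv hne).hasFDerivAt.restrictScalars ℝ).comp z hf.hasFDerivAt
  rw [wdzbar_eq h]
  simp [wdzbar, hf.hasFDerivAt.fderiv, ContinuousLinearMap.restrictScalars, smul_eq_mul]
  ring

lemma conj_fderiv_real {Fc : ℂ → ℂ} {z : ℂ} (hd : DifferentiableAt ℝ Fc z)
    (hreal : ∀ w, (starRingEnd ℂ) (Fc w) = Fc w) (v : ℂ) :
    ((fderiv ℝ Fc z v).re : ℂ) = fderiv ℝ Fc z v := by
  have e1 : fderiv ℝ (fun w => (starRingEnd ℂ) (Fc w)) z =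
      (Complex.conjCLE.toContinuousLinearMap).comp (fderiv ℝ Fc z) :=
    (hasFDerivAt_conj hd.hasFDerivAt).fderiv
  have e2 : (fun w => (starRingEnd ℂ) (Fc w)) = Fc := funext hreal
  rw [e2] at e1
  have : (starRingEnd ℂ) (fderiv ℝ Fc z v) = fderiv ℝ Fc z v := by
    conv_rhs => rw [e1]
    rfl
  exact Complex.conj_eq_iff_re.mp this

lemma wdz_log_re {Fc : ℂ → ℂ} {z : ℂ} (hd : DifferentiableAt ℝ Fc z)
    (hreal : ∀ w, (starRingEnd ℂ) (Fc w) = Fc w) (hpos : 0 < (Fc z).re) :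
    wdz (fun w => ((Real.log ((Fc w).re) : ℝ) : ℂ)) z = (Fc z)⁻¹ * wdz Fc z := by
  set L := fderiv ℝ Fc z with hL
  have hre : HasFDerivAt (fun w => (Fc w).re) (Complex.reCLM.comp L) z :=
    (Complex.reCLM.hasFDerivAt).comp z hd.hasFDerivAt
  have hlog := (Real.hasDerivAt_log hpos.ne').comp_hasFDerivAt z hre
  have hfull : HasFDerivAt (fun w => ((Real.log ((Fc w).re) : ℝ) : ℂ))
      (Complex.ofRealCLM.comp (((Fc z).re)⁻¹ • (Complex.reCLM.comp L))) z :=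
    Complex.ofRealCLM.hasFDerivAt.comp z hlog
  rw [wdz_eq hfull]
  have h1 : ((L 1).re : ℂ) = L 1 := conj_fderiv_real hd hreal 1
  have hI : ((L Complex.I).re : ℂ) = L Complex.I := conj_fderiv_real hd hreal Complex.I
  have hFz : (((Fc z).re : ℝ) : ℂ) = Fc z := Complex.conj_eq_iff_re.mp (hreal z)
  simp only [ContinuousLinearMap.comp_apply, ContinuousLinearMap.smul_apply,
    Complex.ofRealCLM_apply, Complex.reCLM_apply, smul_eq_mul, Complex.ofReal_mul,
    Complex.ofReal_inv, wdz, ← hL, h1, hI, hFz]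
  ring

lemma cs_proportional {m : ℕ} (a d : Fin m → ℂ) (ha : a ≠ 0)
    (h : (∑ i, Complex.normSq (a i)) * (∑ i, Complex.normSq (d i)) =
      Complex.normSq (∑ i, (starRingEnd ℂ) (a i) * d i)) :
    ∃ lam : ℂ, ∀ i, d i = lam * a i := by
  by_cases hd : d = 0
  · exact ⟨0, fun i => by simp [hd]⟩
  · set x : EuclideanSpace ℂ (Fin m) := (WithLp.equiv 2 _).symm a with hxdef
    set y : EuclideanSpace ℂ (Fin m) := (WithLp.equiv 2 _).symm d with hydef
    have hx : x ≠ 0 := by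
      intro h0
      apply ha
      have := congrArg (WithLp.equiv 2 (Fin m → ℂ)) h0
      simpa [hxdef] using this
    have hy : y ≠ 0 := by
      intro h0
      apply hd
      have := congrArg (WithLp.equiv 2 (Fin m → ℂ)) h0
      simpa [hydef] using this
    have hinner : (inner ℂ x y : ℂ) = ∑ i, (starRingEnd ℂ) (a i) * d i := by
      rw [PiLp.inner_apply]
      simp [hxdef, hydef, RCLike.inner_apply, mul_comm]
    have hnx : ‖x‖ = Real.sqrt (∑ i, Complex.normSq (a i)) := by
      rw [EuclideanSpace.norm_eq]
      congr 1
      exact Finset.sum_congr rfl fun i _ => by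
        rw [← Complex.sq_norm]; rfl
    have hny : ‖y‖ = Real.sqrt (∑ i, Complex.normSq (d i)) := by
      rw [EuclideanSpace.norm_eq]
      congr 1
      exact Finset.sum_congr rfl fun i _ => by
        rw [← Complex.sq_norm]; rfl
    have key : ‖(inner ℂ x y : ℂ)‖ = ‖x‖ * ‖y‖ := by
      rw [hinner, hnx, hny,
        ← Real.sqrt_mul (Finset.sum_nonneg fun i _ => Complex.normSq_nonneg _), h,
        Complex.norm_def]
    obtain ⟨r, _, hyx⟩ := (norm_inner_eq_norm_iff hx hy).mp key
    exact ⟨r, fun i => congrFun (congrArg (WithLp.equiv 2 (Fin m → ℂ)) hyx) i⟩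

/-- If `s : ℂ → ℂ^m∖{0}` is holomorphic and `∂²/∂z∂z̄ log‖s‖² ≡ 0`, then the induced map
to `ℂP^{m−1}` is constant: `s(z) = h(z)·v` for a nonvanishing holomorphic `h` and fixed `v`. -/
theorem projective_constant_of_flat (m : ℕ) (s : ℂ → Fin m → ℂ)
    (hs : ∀ i, Differentiable ℂ (fun z => s z i))
    (hnz : ∀ z, s z ≠ 0)
    (hflat : ∀ z : ℂ,
      wdzbar (wdz (fun w => (Real.log (∑ i, Complex.normSq (s w i)) : ℂ))) z = 0) :
    ∃ (h : ℂ → ℂ) (v : Fin m → ℂ), Differentiable ℂ h ∧ (∀ z, h z ≠ 0) ∧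
      ∀ z i, s z i = h z * v i := by
    classical
  -- derivatives of components
  set sd : Fin m → ℂ → ℂ := fun i => deriv (fun w => s w i) with hsddef
  have hsdDiff : ∀ i, Differentiable ℂ (sd i) := by
    intro i
    have h1 := ((hs i).differentiableOn.analyticOnNhd isOpen_univ).deriv
    intro z
    exact (h1 z (Set.mem_univ z)).differentiableAt
  have hsR : ∀ i, Differentiable ℝ (fun z => s z i) := fun i => (hs i).restrictScalars ℝ
  have hsdR : ∀ i, Differentiable ℝ (sd i) := fun i => (hsdDiff i).restrictScalars ℝ
  have hconjR : ∀ i, Differentiable ℝ (fun z => (starRingEnd ℂ) (s z i)) := fun i =>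
    Complex.conjCLE.differentiable.comp (hsR i)
  -- Fc and A
  set Fc : ℂ → ℂ := fun w => ∑ i, s w i * (starRingEnd ℂ) (s w i) with hFcdef
  set A : ℂ → ℂ := fun w => ∑ i, sd i w * (starRingEnd ℂ) (s w i) with hAdef
  have hFcdiff : Differentiable ℝ Fc :=
    Differentiable.fun_sum fun i _ => (hsR i).fun_mul (hconjR i)
  have hAdiff : Differentiable ℝ A :=
    Differentiable.fun_sum fun i _ => (hsdR i).fun_mul (hconjR i)
  have hFcreal : ∀ w, (starRingEnd ℂ) (Fc w) = Fc w := by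
    intro w
    simp only [hFcdef, map_sum, map_mul, Complex.conj_conj]
    exact Finset.sum_congr rfl fun i _ => mul_comm _ _
  have hFcval : ∀ w, Fc w = ((∑ i, Complex.normSq (s w i) : ℝ) : ℂ) := by
    intro w
    simp only [hFcdef, Complex.mul_conj]
    push_cast
    rfl
  have hFcre : ∀ w, (Fc w).re = ∑ i, Complex.normSq (s w i) := by
    intro w; rw [hFcval w, Complex.ofReal_re]
  have hFcpos : ∀ w, 0 < (Fc w).re := by
    intro w
    rw [hFcre w]
    obtain ⟨i, hi⟩ := Function.ne_iff.mp (hnz w)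
    exact Finset.sum_pos' (fun j _ => Complex.normSq_nonneg _)
      ⟨i, Finset.mem_univ i, Complex.normSq_pos.mpr (by simpa using hi)⟩
  have hFcne : ∀ w, Fc w ≠ 0 := by
    intro w h0
    have := hFcpos w
    rw [h0] at this
    simp at this
  -- per-term wdz/wdzbar computations
  have htermz : ∀ i z, wdz (fun w => s w i * (starRingEnd ℂ) (s w i)) z
      = sd i z * (starRingEnd ℂ) (s z i) := by
    intro i z
    rw [wdz_mul (hsR i z) (hconjR i z), wdz_of_holo ((hs i) z), wdz_conj (hsR i z),
      wdzbar_of_holo ((hs i) z)]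
    simp [hsddef]
  have htermbarFc : ∀ i z, wdzbar (fun w => s w i * (starRingEnd ℂ) (s w i)) z
      = s z i * (starRingEnd ℂ) (sd i z) := by
    intro i z
    rw [wdzbar_mul (hsR i z) (hconjR i z), wdzbar_of_holo ((hs i) z), wdzbar_conj (hsR i z),
      wdz_of_holo ((hs i) z)]
    simp [hsddef]
  have htermbarA : ∀ i z, wdzbar (fun w => sd i w * (starRingEnd ℂ) (s w i)) z
      = ((Complex.normSq (sd i z) : ℝ) : ℂ) := by
    intro i z
    rw [wdzbar_mul (hsdR i z) (hconjR i z), wdzbar_of_holo ((hsdDiff i) z),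
      wdzbar_conj (hsR i z), wdz_of_holo ((hs i) z)]
    simp [hsddef, Complex.mul_conj]
  -- the inner Wirtinger derivative
  have hG : wdz (fun w => ((Real.log (∑ i, Complex.normSq (s w i)) : ℝ) : ℂ))
      = fun z => (Fc z)⁻¹ * A z := by
    funext z
    have hfun : (fun w => ((Real.log (∑ i, Complex.normSq (s w i)) : ℝ) : ℂ))
        = fun w => ((Real.log ((Fc w).re) : ℝ) : ℂ) := by
      funext w; rw [hFcre w]
    rw [hfun, wdz_log_re (hFcdiff z) hFcreal (hFcpos z)]
    congr 1
    rw [hFcdef]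
    rw [wdz_sum Finset.univ (fun i _ => (hsR i z).fun_mul (hconjR i z))]
    rw [hAdef]
    exact Finset.sum_congr rfl fun i _ => htermz i z
  -- key identity from flatness
  have hkey : ∀ z, (∑ i, Complex.normSq (s z i)) * (∑ i, Complex.normSq (sd i z))
      = Complex.normSq (∑ i, (starRingEnd ℂ) (s z i) * sd i z) := by
    intro z
    have h0 := hflat z
    rw [hG] at h0
    have hinvd : DifferentiableAt ℝ (fun w => (Fc w)⁻¹) z := (hFcdiff z).inv (hFcne z)
    rw [wdzbar_mul hinvd (hAdiff z), wdzbar_inv (hFcdiff z) (hFcne z)] at h0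
    have hbarA : wdzbar A z = ((∑ i, Complex.normSq (sd i z) : ℝ) : ℂ) := by
      rw [hAdef, wdzbar_sum Finset.univ (fun i _ => (hsdR i z).fun_mul (hconjR i z))]
      push_cast
      exact Finset.sum_congr rfl fun i _ => htermbarA i z
    have hbarFc : wdzbar Fc z = (starRingEnd ℂ) (A z) := by
      rw [hFcdef, wdzbar_sum Finset.univ (fun i _ => (hsR i z).fun_mul (hconjR i z)), hAdef]
      rw [map_sum]
      exact Finset.sum_congr rfl fun i _ => by
        rw [htermbarFc i z, map_mul, Complex.conj_conj]; ring
    rw [hbarA, hbarFc] at h0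
    -- h0 : -(Fc z ^ 2)⁻¹ * conj (A z) * A z + (Fc z)⁻¹ * (↑∑ normSq (sd i z)) = 0
    have hAconj : (∑ i, (starRingEnd ℂ) (s z i) * sd i z) = A z := by
      rw [hAdef]; exact Finset.sum_congr rfl fun i _ => mul_comm _ _
    field_simp [hFcne z] at h0
    have hS : (∑ i, (Complex.normSq (s z i) : ℂ)) = Fc z := by
      rw [hFcval z]; push_cast; rfl
    have hgoal : Fc z * (∑ i, (Complex.normSq (sd i z) : ℂ))
        = A z * (starRingEnd ℂ) (A z) := by
      have h2 : Fc z * (Fc z * (∑ i, (Complex.normSq (sd i z) : ℂ)))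
          = Fc z * (A z * (starRingEnd ℂ) (A z)) := by
        push_cast at h0 ⊢
        linear_combination (Fc z) * h0
      exact mul_left_cancel₀ (hFcne z) h2
    have hcx : ((∑ i, Complex.normSq (s z i)) * (∑ i, Complex.normSq (sd i z)) : ℂ)
        = ((Complex.normSq (∑ i, (starRingEnd ℂ) (s z i) * sd i z) : ℝ) : ℂ) := by
      push_cast
      rw [hAconj, ← Complex.mul_conj, hS]
      push_cast
      exact hgoal
    exact_mod_cast hcx
  -- pointwise proportionality, hence Wronskian vanishing
  have hprop : ∀ z, ∃ lam : ℂ, ∀ i, sd i z = lam * s z i := by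
    intro z
    refine cs_proportional (fun i => s z i) (fun i => sd i z) ?_ ?_
    · intro h0
      exact hnz z (funext fun i => congrFun h0 i)
    · exact hkey z
  have hW : ∀ i j z, sd i z * s z j - sd j z * s z i = 0 := by
    intro i j z
    obtain ⟨lam, hlam⟩ := hprop z
    rw [hlam i, hlam j]; ring
  -- choose a coordinate nonvanishing at 0
  obtain ⟨j, hj⟩ := Function.ne_iff.mp (hnz 0)
  have hj' : s 0 j ≠ 0 := by simpa using hj
  -- the cross identity s z i * s 0 j = s z j * s 0 i, via identity theorem
  have hcross : ∀ i z, s z i * s 0 j = s z j * s 0 i := by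
    intro i
    have hUopen : IsOpen {w : ℂ | s w j ≠ 0} := by
      have he : {w : ℂ | s w j ≠ 0} = (fun w => s w j) ⁻¹' {(0:ℂ)}ᶜ := rfl
      rw [he]
      exact isOpen_compl_singleton.preimage (hs j).continuous
    obtain ⟨ε, hε, hball⟩ := Metric.isOpen_iff.mp hUopen 0 hj'
    have hqconst : ∀ x ∈ Metric.ball (0:ℂ) ε, s x i / s x j = s 0 i / s 0 j := by
      intro x hx
      have hq : ∀ y ∈ Metric.ball (0:ℂ) ε,
          fderivWithin ℂ (fun w => s w i / s w j) (Metric.ball (0:ℂ) ε) y = 0 := by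
        intro y hy
        have hyj : s y j ≠ 0 := hball hy
        have hdq : HasDerivAt (fun w => s w i / s w j)
            ((sd i y * s y j - s y i * sd j y) / s y j ^ 2) y :=
          ((hs i) y).hasDerivAt.div ((hs j) y).hasDerivAt hyj
        have h0 : sd i y * s y j - s y i * sd j y = 0 := by
          have := hW i j y; linear_combination this
        rw [h0, zero_div] at hdq
        rw [fderivWithin_of_isOpen Metric.isOpen_ball hy, hdq.hasFDerivAt.fderiv]
        ext
        simp
      have hdiff : DifferentiableOn ℂ (fun w => s w i / s w j) (Metric.ball (0:ℂ) ε) :=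
        fun y hy => (((hs i) y).div ((hs j) y) (hball hy)).differentiableWithinAt
      exact (convex_ball (0:ℂ) ε).is_const_of_fderivWithin_eq_zero hdiff hq hx
        (Metric.mem_ball_self hε)
    have hev : (fun z => s z i * s 0 j) =ᶠ[nhds (0:ℂ)] (fun z => s z j * s 0 i) := by
      filter_upwards [Metric.ball_mem_nhds (0:ℂ) hε] with x hx
      have hxj : s x j ≠ 0 := hball hx
      have h1 := (div_eq_div_iff hxj hj').mp (hqconst x hx)
      rw [h1]; ring
    have ha1 : AnalyticOnNhd ℂ (fun z => s z i * s 0 j) Set.univ :=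
      analyticOnNhd_univ_iff_differentiable.mpr ((hs i).mul_const _)
    have ha2 : AnalyticOnNhd ℂ (fun z => s z j * s 0 i) Set.univ :=
      analyticOnNhd_univ_iff_differentiable.mpr ((hs j).mul_const _)
    have hfe := ha1.eq_of_eventuallyEq ha2 hev
    intro z
    exact congrFun hfe z
  refine ⟨fun z => s z j, fun i => s 0 i / s 0 j, hs j, ?_, ?_⟩
  · intro z h0
    have h0' : s z j = 0 := h0
    apply hnz z
    funext i
    show s z i = 0
    have hc := hcross i z
    rw [h0', zero_mul] at hc
    exact (mul_eq_zero.mp hc).resolve_right hj'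
  · intro z i
    have hc := hcross i z
    field_simp
    linear_combination hc
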